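/- The infimum, over all ℝ-words w over X = {a, b} whose evaluation equals g₁ = ((1, 0), 0, 0), of the length ℓ(w), equals 1 (so the Stoll length of g₁ with respect to X is 1, and by the previous statement this infimum is not attained). -/

import Mathlib

noncomputable section

/-- The Engel Lie group `Ē`: underlying set `ℝ² × ℝ × ℝ`, with coordinates
`(x, y)` (endpoint), `A` (signed area) and `B` (the `y`-moment). -/
@[ext]
structure Engel where
  x : ℝ
  y : ℝ
  A : ℝ
  B : ℝ

namespace Engel

instance : Mul Engel :=
  ⟨fun g h =>
    ⟨g.x + h.x, g.y + h.y,
     g.A + h.A + (g.x * h.y - g.y * h.x) / 2,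
     g.B + h.B + g.y * h.A + (2 * g.y + h.y) * (g.x * h.y - g.y * h.x) / 6⟩⟩

instance : One Engel := ⟨⟨0, 0, 0, 0⟩⟩

instance : Inv Engel := ⟨fun g => ⟨-g.x, -g.y, -g.A, -g.B + g.y * g.A⟩⟩

@[simp] lemma mul_x (g h : Engel) : (g * h).x = g.x + h.x := rfl
@[simp] lemma mul_y (g h : Engel) : (g * h).y = g.y + h.y := rfl
@[simp] lemma mul_A (g h : Engel) :
    (g * h).A = g.A + h.A + (g.x * h.y - g.y * h.x) / 2 := rfl
@[simp] lemma mul_B (g h : Engel) :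
    (g * h).B = g.B + h.B + g.y * h.A
      + (2 * g.y + h.y) * (g.x * h.y - g.y * h.x) / 6 := rfl
@[simp] lemma one_x : (1 : Engel).x = 0 := rfl
@[simp] lemma one_y : (1 : Engel).y = 0 := rfl
@[simp] lemma one_A : (1 : Engel).A = 0 := rfl
@[simp] lemma one_B : (1 : Engel).B = 0 := rfl
@[simp] lemma inv_x (g : Engel) : g⁻¹.x = -g.x := rfl
@[simp] lemma inv_y (g : Engel) : g⁻¹.y = -g.y := rfl
@[simp] lemma inv_A (g : Engel) : g⁻¹.A = -g.A := rfl
@[simp] lemma inv_B (g : Engel) : g⁻¹.B = -g.B + g.y * g.A := rfl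

instance : Group Engel where
  mul_assoc a b c := by ext <;> simp <;> ring
  one_mul a := by ext <;> simp
  mul_one a := by ext <;> simp
  inv_mul_cancel a := by
    ext <;>
      simp only [mul_x, mul_y, mul_A, mul_B, inv_x, inv_y, inv_A, inv_B,
        one_x, one_y, one_A, one_B] <;> ring

/-- `a^t`: the straight segment from `(0,0)` to `(t,t)`. -/
def aPow (t : ℝ) : Engel := ⟨t, t, 0, 0⟩

/-- `b^t`: the straight segment from `(0,0)` to `(t,-t)`. -/
def bPow (t : ℝ) : Engel := ⟨t, -t, 0, 0⟩

end Engel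

namespace Engel

/-- An ℝ-word over `X = {a, b}` is a finite sequence of pairs `(xᵢ, tᵢ)` with
`xᵢ ∈ {a, b}` (encoded as `Bool`: `true ↦ a`, `false ↦ b`) and `tᵢ ∈ ℝ`.
Its evaluation is the product `x₁^{t₁}·…·x_k^{t_k}` in `Ē`. -/
def wordEval (w : List (Bool × ℝ)) : Engel :=
  (w.map fun p => if p.1 then aPow p.2 else bPow p.2).prod

/-- The length `ℓ(w) = Σᵢ |tᵢ|` of an ℝ-word. -/
def wordLen (w : List (Bool × ℝ)) : ℝ := (w.map fun p => |p.2|).sum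

end Engel

namespace Engel


/-- A basic block `a^u b^u b^u a^u`. -/
def block (u : ℝ) : List (Bool × ℝ) := [(true, u), (false, u), (false, u), (true, u)]

/-- `n` copies of `block u`. -/
def reps : ℕ → ℝ → List (Bool × ℝ)
  | 0, _ => []
  | n + 1, u => block u ++ reps n u

lemma wordEval_append (w₁ w₂ : List (Bool × ℝ)) :
    wordEval (w₁ ++ w₂) = wordEval w₁ * wordEval w₂ := by
  simp [wordEval]

lemma wordLen_append (w₁ w₂ : List (Bool × ℝ)) :
    wordLen (w₁ ++ w₂) = wordLen w₁ + wordLen w₂ := by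
  simp [wordLen]

lemma block_eval (u : ℝ) : wordEval (block u) = ⟨4 * u, 0, 0, -2 * u ^ 3 / 3⟩ := by
  ext <;> simp [wordEval, block, aPow, bPow] <;> ring

lemma block_len (u : ℝ) : wordLen (block u) = 4 * |u| := by
  simp [wordLen, block]; ring

lemma reps_eval (n : ℕ) (u : ℝ) :
    wordEval (reps n u) = ⟨4 * n * u, 0, 0, -2 * n * u ^ 3 / 3⟩ := by
  induction n with
  | zero => ext <;> simp [reps, wordEval]
  | succ n ih =>
    rw [reps, wordEval_append, block_eval, ih]
    ext <;> simp <;> push_cast <;> ring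

lemma reps_len (n : ℕ) (u : ℝ) : wordLen (reps n u) = 4 * n * |u| := by
  induction n with
  | zero => simp [reps, wordLen]
  | succ n ih =>
    rw [reps, wordLen_append, block_len, ih]
    push_cast; ring

lemma evalX (w : List (Bool × ℝ)) : (wordEval w).x = (w.map Prod.snd).sum := by
  induction w with
  | nil => rfl
  | cons p w ih =>
    rcases p with ⟨b, t⟩
    simp only [wordEval, List.map_cons, List.prod_cons, mul_x, List.sum_cons] at *
    rw [← ih]
    cases b <;> rfl

lemma abs_sum_le (w : List (Bool × ℝ)) : |(w.map Prod.snd).sum| ≤ wordLen w := by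
  induction w with
  | nil => simp [wordLen]
  | cons p w ih =>
    simp only [List.map_cons, List.sum_cons, wordLen] at *
    exact (abs_add_le _ _).trans (by linarith)

lemma mem_S (m : ℕ) (hm : 2 ≤ m) :
    ∃ w : List (Bool × ℝ), wordEval w = ⟨1, 0, 0, 0⟩ ∧
      wordLen w = ((m : ℝ) ^ 2 + 1) / ((m : ℝ) ^ 2 - 1) := by
  set M : ℝ := (m : ℝ) with hM
  have hM2 : (2 : ℝ) ≤ M := by rw [hM]; exact_mod_cast hm
  have hpos : 0 < 4 * M * (M ^ 2 - 1) := by nlinarith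
  set p : ℝ := 1 / (4 * M * (M ^ 2 - 1)) with hp
  have hppos : 0 < p := by positivity
  have hMne : M ≠ 0 := by nlinarith
  have hdne : M ^ 2 - 1 ≠ 0 := by nlinarith
  refine ⟨reps (m ^ 3) p ++ block (-(M * p)), ?_, ?_⟩
  · rw [wordEval_append, reps_eval, block_eval]
    have hc : ((m ^ 3 : ℕ) : ℝ) = M ^ 3 := by push_cast; ring
    ext <;> simp [hc] <;> rw [hp] <;> field_simp <;> ring
  · rw [wordLen_append, reps_len, block_len]
    have hc : ((m ^ 3 : ℕ) : ℝ) = M ^ 3 := by push_cast; ring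
    rw [hc, abs_neg, abs_of_pos hppos, abs_of_pos (by positivity : (0:ℝ) < M * p), hp]
    field_simp

/-- The infimum, over all ℝ-words `w` over `X = {a, b}` whose evaluation equals
`g₁ = ((1, 0), 0, 0)`, of the length `ℓ(w)`, equals `1`; i.e. `1` is the greatest
lower bound of the set of lengths of such words (so the Stoll length of `g₁`
with respect to `X` is `1`). -/
theorem stoll_length_g1_eq_one :
    IsGLB {r : ℝ | ∃ w : List (Bool × ℝ), wordEval w = ⟨1, 0, 0, 0⟩ ∧ wordLen w = r} 1 := by
  constructor
  · rintro r ⟨w, hw, hl⟩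
    have hx : (wordEval w).x = 1 := by rw [hw]
    have h1 : (1 : ℝ) = |(w.map Prod.snd).sum| := by
      rw [← evalX, hx]; simp
    rw [← hl]
    calc (1 : ℝ) = |(w.map Prod.snd).sum| := h1
      _ ≤ wordLen w := abs_sum_le w
  · intro c hc
    by_contra hlt
    push_neg at hlt
    obtain ⟨n, hn⟩ := exists_nat_gt (2 / (c - 1))
    set m := n + 2 with hm
    have hm2 : 2 ≤ m := by omega
    have hMn : (n : ℝ) ≤ (m : ℝ) := by exact_mod_cast (by omega : n ≤ m)
    have hM2 : (2 : ℝ) ≤ (m : ℝ) := by exact_mod_cast hm2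
    have hkey : ((m : ℝ) ^ 2 + 1) / ((m : ℝ) ^ 2 - 1) < c := by
      have hden : (0 : ℝ) < (m : ℝ) ^ 2 - 1 := by nlinarith
      rw [div_lt_iff₀ hden]
      have hc1 : (0 : ℝ) < c - 1 := by linarith
      have h2 : 2 / (c - 1) < (m : ℝ) := lt_of_lt_of_le hn hMn
      have h3 : 2 < (c - 1) * (m : ℝ) := by
        rw [div_lt_iff₀ hc1] at h2; linarith
      nlinarith
    obtain ⟨w, hw, hl⟩ := mem_S m hm2
    have := hc ⟨w, hw, hl⟩
    linarith


end Engel
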